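/- The Frobenius number of G_{a,b}(c) equals x_{c-1} - c, where x_{c-1} = Σ_{i=1}^{k} j_i·t_i(a,b,c) and { j_i }_{i=1}^{k} is the unique a-reduced family with c - 1 = Σ_{i=1}^{k} j_i·s_i(a). -/

import Mathlib

/-- `sF a k = Σ_{i=0}^{k-1} a^i` (so `sF a 0 = 0`). -/
def sF (a k : ℕ) : ℕ := ∑ i ∈ Finset.range k, a ^ i

/-- `tF a b c k = a^k * c + b * sF a k`. -/
def tF (a b c k : ℕ) : ℕ := a ^ k * c + b * sF a k

/-- A θ_{a,b}-semigroup: contains 0, closed under addition, and closed under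
`x ↦ a*x + b` on nonzero elements. -/
def IsThetaSG (a b : ℕ) (S : Set ℕ) : Prop :=
  0 ∈ S ∧ (∀ x ∈ S, ∀ y ∈ S, x + y ∈ S) ∧ ∀ y ∈ S, y ≠ 0 → a * y + b ∈ S

/-- `Gset a b c` : the smallest θ_{a,b}-semigroup containing `c`. -/
def Gset (a b c : ℕ) : Set ℕ := ⋂₀ {S : Set ℕ | IsThetaSG a b S ∧ c ∈ S}

/-- `Hmon a b c` : additive submonoid generated by the `tF a b c k`. -/
def Hmon (a b c : ℕ) : AddSubmonoid ℕ :=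
  AddSubmonoid.closure {x | ∃ k, x = tF a b c k}

/-- `{j_i}_{i=1}^k` is `a`-reduced. -/
def AReduced (a k : ℕ) (j : ℕ → ℕ) : Prop :=
  (∀ i, 1 ≤ i → i ≤ k → j i ≤ a) ∧ j k ≠ 0 ∧
  ∀ m, 1 ≤ m → m ≤ k → j m = a → ∀ i, 1 ≤ i → i < m → j i = 0

namespace Aux

/-- Value of a digit family. -/
def Vv (a : ℕ) (j : ℕ → ℕ) (k : ℕ) : ℕ := ∑ i ∈ Finset.Icc 1 k, j i * sF a i
/-- `a`-power value of a digit family. -/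
def Av (a : ℕ) (j : ℕ → ℕ) (k : ℕ) : ℕ := ∑ i ∈ Finset.Icc 1 k, j i * a ^ i
/-- Digit sum of a family. -/
def Jv (j : ℕ → ℕ) (k : ℕ) : ℕ := ∑ i ∈ Finset.Icc 1 k, j i
/-- Weak reducedness. -/
def Red' (a k : ℕ) (j : ℕ → ℕ) : Prop :=
  (∀ i, 1 ≤ i → i ≤ k → j i ≤ a) ∧
  ∀ m, 1 ≤ m → m ≤ k → j m = a → ∀ i, 1 ≤ i → i < m → j i = 0
/-- Value of a multiset of indices. -/
def VM (a : ℕ) (m : Multiset ℕ) : ℕ := (m.map (sF a)).sum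

lemma sF_succ (a k : ℕ) : sF a (k+1) = a * sF a k + 1 := by
  unfold sF
  rw [Finset.sum_range_succ' (fun i => a ^ i) k]
  simp [Finset.mul_sum, pow_succ, mul_comm, add_comm]

lemma sF_one (a : ℕ) : sF a 1 = 1 := by simp [sF]

lemma one_le_sF {a : ℕ} (ha : 1 ≤ a) {k : ℕ} (hk : 1 ≤ k) : 1 ≤ sF a k := by
  obtain ⟨k, rfl⟩ := Nat.exists_eq_add_of_le hk
  rw [add_comm, sF_succ]; omega

lemma sF_strictMono {a : ℕ} (ha : 1 ≤ a) : StrictMono (sF a) := by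
  apply strictMono_nat_of_lt_succ
  intro n
  rw [sF_succ]
  nlinarith [sF a n, ha]

lemma self_le_sF {a : ℕ} (ha : 1 ≤ a) (k : ℕ) : k ≤ sF a k := by
  induction k with
  | zero => simp [sF]
  | succ n ih => rw [sF_succ]; nlinarith

lemma pow_eq_sF {a : ℕ} (ha : 1 ≤ a) (i : ℕ) : a ^ i = (a-1) * sF a i + 1 := by
  induction i with
  | zero => simp [sF]
  | succ n ih =>
    rw [sF_succ, pow_succ]
    have : a - 1 + 1 = a := by omega
    nlinarith [this]

lemma Red'_mono {a k K : ℕ} {j : ℕ → ℕ} (h : Red' a K j) (hkK : k ≤ K) : Red' a k j :=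
  ⟨fun i h1 h2 => h.1 i h1 (h2.trans hkK),
   fun m h1 h2 hm i hi1 hi2 => h.2 m h1 (h2.trans hkK) hm i hi1 hi2⟩

lemma Vv_succ (a : ℕ) (j : ℕ → ℕ) (k : ℕ) :
    Vv a j (k+1) = Vv a j k + j (k+1) * sF a (k+1) :=
  Finset.sum_Icc_succ_top (by omega) _

lemma Av_succ (a : ℕ) (j : ℕ → ℕ) (k : ℕ) :
    Av a j (k+1) = Av a j k + j (k+1) * a ^ (k+1) :=
  Finset.sum_Icc_succ_top (by omega) _

lemma Vv_lt {a : ℕ} (ha : 1 ≤ a) : ∀ (k : ℕ) (j : ℕ → ℕ), Red' a k j →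
    Vv a j k < sF a (k+1) := by
  intro k
  induction k with
  | zero => intro j _; simp [Vv, sF_one]
  | succ n ih =>
    intro j hj
    rw [Vv_succ]
    by_cases hd : j (n+1) = a
    · have h0 : Vv a j n = 0 := by
        apply Finset.sum_eq_zero
        intro i hi
        simp only [Finset.mem_Icc] at hi
        rw [hj.2 (n+1) (by omega) le_rfl hd i hi.1 (by omega)]
        ring
      rw [h0, hd, sF_succ a (n+1)]
      omega
    · have hd' : j (n+1) ≤ a - 1 := by
        have := hj.1 (n+1) (by omega) le_rfl; omega
      have h1 : Vv a j n < sF a (n+1) := ih j (Red'_mono hj (by omega))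
      have h2 : j (n+1) * sF a (n+1) ≤ (a-1) * sF a (n+1) :=
        Nat.mul_le_mul_right _ hd'
      rw [sF_succ a (n+1)]
      have h3 : 1 ≤ sF a (n+1) := one_le_sF ha (by omega)
      have : (a-1) * sF a (n+1) + sF a (n+1) = a * sF a (n+1) := by
        have : a - 1 + 1 = a := by omega
        nlinarith [this]
      omega

lemma Av_le {a : ℕ} (ha : 1 ≤ a) : ∀ (k : ℕ) (j : ℕ → ℕ), Red' a k j →
    Av a j k ≤ a ^ (k+1) := by
  intro k
  induction k with
  | zero => intro j _; simpa [Av] using Nat.one_le_pow 1 a (by omega)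
  | succ n ih =>
    intro j hj
    rw [Av_succ]
    by_cases hd : j (n+1) = a
    · have h0 : Av a j n = 0 := by
        apply Finset.sum_eq_zero
        intro i hi
        simp only [Finset.mem_Icc] at hi
        rw [hj.2 (n+1) (by omega) le_rfl hd i hi.1 (by omega)]
        ring
      rw [h0, hd, ← pow_succ']
      omega
    · have hd' : j (n+1) ≤ a - 1 := by
        have := hj.1 (n+1) (by omega) le_rfl; omega
      have h1 : Av a j n ≤ a ^ (n+1) := ih j (Red'_mono hj (by omega))
      have h2 : j (n+1) * a ^ (n+1) ≤ (a-1) * a ^ (n+1) :=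
        Nat.mul_le_mul_right _ hd'
      have h4 : a ^ (n+1+1) = a * a ^ (n+1) := by ring
      have : (a-1) * a ^ (n+1) + a ^ (n+1) = a * a ^ (n+1) := by
        have : a - 1 + 1 = a := by omega
        nlinarith [this]
      omega

lemma Av_mono {a : ℕ} (ha : 1 ≤ a) : ∀ (k : ℕ) (j j' : ℕ → ℕ), Red' a k j → Red' a k j' →
    Vv a j k ≤ Vv a j' k → Av a j k ≤ Av a j' k := by
  intro k
  induction k with
  | zero => intro j j' _ _ _; simp [Av]
  | succ n ih =>
    intro j j' hj hj' hv
    have hjn := Red'_mono hj (Nat.le_succ n)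
    have hjn' := Red'_mono hj' (Nat.le_succ n)
    have h1 : Vv a j n < sF a (n+1) := Vv_lt ha n j hjn
    have h2 : Vv a j' n < sF a (n+1) := Vv_lt ha n j' hjn'
    rw [Vv_succ] at hv
    rw [Vv_succ] at hv
    have hdig : j (n+1) ≤ j' (n+1) := by
      by_contra hlt
      push_neg at hlt
      have : (j' (n+1) + 1) * sF a (n+1) ≤ j (n+1) * sF a (n+1) :=
        Nat.mul_le_mul_right _ hlt
      nlinarith
    rw [Av_succ, Av_succ]
    rcases Nat.lt_or_ge (j (n+1)) (j' (n+1)) with hlt | hge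
    · have hA : Av a j n ≤ a ^ (n+1) := Av_le ha n j hjn
      have : (j (n+1) + 1) * a ^ (n+1) ≤ j' (n+1) * a ^ (n+1) :=
        Nat.mul_le_mul_right _ hlt
      nlinarith [Nat.zero_le (Av a j' n)]
    · have heq : j (n+1) = j' (n+1) := le_antisymm hdig hge
      rw [heq] at hv ⊢
      have : Vv a j n ≤ Vv a j' n := by omega
      have := ih j j' hjn hjn' this
      omega

lemma Av_eq {a : ℕ} (ha : 1 ≤ a) (k : ℕ) (j : ℕ → ℕ) :
    Av a j k = (a-1) * Vv a j k + Jv j k := by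
  unfold Av Vv Jv
  rw [Finset.mul_sum, ← Finset.sum_add_distrib]
  apply Finset.sum_congr rfl
  intro i _
  rw [pow_eq_sF ha i]
  ring

lemma Jv_eq_of_Vv_eq {a : ℕ} (ha : 1 ≤ a) (k : ℕ) (j j' : ℕ → ℕ) (h : Red' a k j)
    (h' : Red' a k j') (hv : Vv a j k = Vv a j' k) : Jv j k = Jv j' k := by
  have h1 := Av_mono ha k j j' h h' (le_of_eq hv)
  have h2 := Av_mono ha k j' j h' h (le_of_eq hv.symm)
  have e1 := Av_eq ha k j
  have e2 := Av_eq ha k j'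
  rw [hv] at e1
  omega

lemma pad_red {a k K : ℕ} {j : ℕ → ℕ} (ha : 1 ≤ a) (h : AReduced a k j) (hkK : k ≤ K) :
    Red' a K (fun i => if i ≤ k then j i else 0) := by
  constructor
  · intro i h1 h2
    by_cases hik : i ≤ k
    · simpa [hik] using h.1 i h1 hik
    · simp [hik]
  · intro m h1 h2 hm i hi1 hi2
    by_cases hmk : m ≤ k
    · simp only [hmk, if_pos] at hm
      have := h.2.2 m h1 hmk hm i hi1 hi2
      simp [show i ≤ k by omega, this]
    · simp only [hmk, if_neg, if_false] at hm
      omega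

lemma pad_sum {k K : ℕ} (hkK : k ≤ K) (f : ℕ → ℕ) (j : ℕ → ℕ) :
    ∑ i ∈ Finset.Icc 1 K, (if i ≤ k then j i else 0) * f i
      = ∑ i ∈ Finset.Icc 1 k, j i * f i := by
  rw [← Finset.sum_subset (Finset.Icc_subset_Icc le_rfl hkK)
      (f := fun i => (if i ≤ k then j i else 0) * f i)]
  · apply Finset.sum_congr rfl
    intro i hi
    simp only [Finset.mem_Icc] at hi
    rw [if_pos hi.2]
  · intro x hx hx2
    simp only [Finset.mem_Icc] at hx hx2
    have : ¬ x ≤ k := by omega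
    simp [this]

lemma exists_reduced {a : ℕ} (ha : 1 ≤ a) : ∀ n : ℕ, 1 ≤ n →
    ∃ k j, 1 ≤ k ∧ AReduced a k j ∧ Vv a j k = n := by
  intro n
  induction n using Nat.strong_induction_on with
  | _ n ih =>
  intro hn
  have hP1 : sF a 1 ≤ n := by rw [sF_one]; omega
  set k := Nat.findGreatest (fun k => sF a k ≤ n) n with hkdef
  have hk1 : 1 ≤ k := Nat.le_findGreatest hn hP1
  have hsk : sF a k ≤ n := Nat.findGreatest_spec (P := fun k => sF a k ≤ n) hn hP1
  have hsk1 : n < sF a (k+1) := by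
    by_cases h : k + 1 ≤ n
    · have := Nat.findGreatest_is_greatest (P := fun k => sF a k ≤ n) (by omega) h
      omega
    · have := self_le_sF ha (k+1); omega
  have hs1 : 1 ≤ sF a k := one_le_sF ha hk1
  set d := n / sF a k with hd
  set r := n % sF a k with hr
  have hdr : sF a k * d + r = n := Nat.div_add_mod n (sF a k)
  have hrlt : r < sF a k := Nat.mod_lt _ (by omega)
  rw [sF_succ] at hsk1
  have hda : d ≤ a := by
    by_contra h; push_neg at h
    have h2 : (a+1) * sF a k ≤ d * sF a k := Nat.mul_le_mul_right _ h
    nlinarith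
  have hd1 : 1 ≤ d := (Nat.one_le_div_iff (by omega)).mpr hsk
  have hdar : d = a → r = 0 := by intro h; rw [h, mul_comm] at hdr; omega
  rcases Nat.eq_zero_or_pos r with hr0 | hr1
  · refine ⟨k, fun i => if i = k then d else 0, hk1, ⟨?_, ?_, ?_⟩, ?_⟩
    · intro i h1 h2; by_cases h : i = k <;> simp [h, hda]
    · simp; omega
    · intro m h1 h2 hm i hi1 hi2
      by_cases h : m = k
      · simp [show ¬ i = k by omega]
      · simp [h] at hm; omega
    · rw [Vv, Finset.sum_eq_single_of_mem k (by simp [Finset.mem_Icc]; omega)]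
      · rw [if_pos rfl, mul_comm]; omega
      · intro x _ hx; simp [hx]
  · have hrn : r < n := by omega
    obtain ⟨k', j', hk'1, hj', hv'⟩ := ih r hrn hr1
    have hsk' : sF a k' ≤ r := by
      have hjk' : 1 ≤ j' k' := Nat.one_le_iff_ne_zero.mpr hj'.2.1
      have hmem : k' ∈ Finset.Icc 1 k' := by simp [Finset.mem_Icc]; omega
      have h2 : j' k' * sF a k' ≤ Vv a j' k' := Finset.single_le_sum (f := fun i => j' i * sF a i)
        (fun i _ => Nat.zero_le _) hmem
      rw [hv'] at h2
      nlinarith [one_le_sF ha hk'1]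
    have hk'k : k' < k := by
      by_contra h; push_neg at h
      have := (sF_strictMono ha).monotone h
      omega
    refine ⟨k, fun i => if i = k then d else (if i ≤ k' then j' i else 0), hk1,
      ⟨?_, ?_, ?_⟩, ?_⟩
    · intro i h1 h2
      by_cases h : i = k
      · simp [h, hda]
      · by_cases h' : i ≤ k'
        · simp [h, h', hj'.1 i h1 h']
        · simp [h, h']
    · simp; omega
    · intro m h1 h2 hm i hi1 hi2
      by_cases h : m = k
      · exfalso; subst h; simp at hm
        exact absurd (hdar hm) (by omega)
      · simp only [h, if_neg, if_false] at hm
        by_cases h' : m ≤ k'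
        · simp only [h', if_pos] at hm
          have := hj'.2.2 m h1 h' hm i hi1 hi2
          simp [show i ≠ k by omega, show i ≤ k' by omega, this]
        · simp [h'] at hm; omega
    · obtain ⟨k0, hkk0⟩ : ∃ k0, k = k0 + 1 := ⟨k-1, by omega⟩
      rw [Vv, hkk0, Finset.sum_Icc_succ_top (by omega)]
      rw [← hkk0]
      have e1 : ∑ i ∈ Finset.Icc 1 k0, (if i = k then d else if i ≤ k' then j' i else 0) * sF a i
          = ∑ i ∈ Finset.Icc 1 k0, (if i ≤ k' then j' i else 0) * sF a i := by
        apply Finset.sum_congr rfl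
        intro i hi
        simp only [Finset.mem_Icc] at hi
        rw [if_neg (by omega)]
      rw [e1, pad_sum (by omega), if_pos rfl]
      have : ∑ i ∈ Finset.Icc 1 k', j' i * sF a i = r := hv'
      rw [this]
      rw [mul_comm] at hdr
      omega

lemma key1 {a : ℕ} {i : ℕ} (hi : 1 ≤ i) :
    (a+1) * sF a i = sF a (i+1) + a * sF a (i-1) := by
  obtain ⟨i0, rfl⟩ : ∃ i0, i = i0 + 1 := ⟨i-1, by omega⟩
  simp only [Nat.add_sub_cancel]
  rw [sF_succ a (i0+1), sF_succ a i0]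
  ring

lemma key2 {a : ℕ} {p i : ℕ} (hi : 1 ≤ i) :
    a * sF a p + sF a i = sF a (p+1) + a * sF a (i-1) := by
  obtain ⟨i0, rfl⟩ : ∃ i0, i = i0 + 1 := ⟨i-1, by omega⟩
  simp only [Nat.add_sub_cancel]
  rw [sF_succ a p, sF_succ a i0]
  ring

lemma VM_cons (a x : ℕ) (s : Multiset ℕ) : VM a (x ::ₘ s) = sF a x + VM a s := by
  simp [VM]

lemma VM_add (a : ℕ) (s t : Multiset ℕ) : VM a (s + t) = VM a s + VM a t := by
  simp [VM]

lemma VM_replicate (a n x : ℕ) : VM a (Multiset.replicate n x) = n * sF a x := by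
  simp [VM, Multiset.map_replicate, Multiset.sum_replicate, smul_eq_mul]

lemma rewriteM {a : ℕ} (ha : 2 ≤ a) : ∀ (W : ℕ) (m : Multiset ℕ),
    Multiset.card m + m.sum ≤ W →
    ∃ m' : Multiset ℕ, (0 ∉ m') ∧ (∀ i, m'.count i ≤ a) ∧
      (∀ p, m'.count p = a → ∀ i, 1 ≤ i → i < p → m'.count i = 0) ∧
      VM a m' = VM a m ∧ Multiset.card m' ≤ Multiset.card m := by
  intro W
  induction W using Nat.strong_induction_on with
  | _ W ih =>
  intro m hm
  by_cases h0 : 0 ∈ m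
  · have hcons : m = 0 ::ₘ m.erase 0 := (Multiset.cons_erase h0).symm
    have hcard : Multiset.card (m.erase 0) + 1 = Multiset.card m := by
      conv_rhs => rw [hcons]
      simp
    have hsum : (m.erase 0).sum = m.sum := by
      conv_rhs => rw [hcons]
      simp
    have hW1 : 1 ≤ W := by omega
    obtain ⟨m', h1, h2, h3, h4, h5⟩ := ih (W-1) (by omega) (m.erase 0) (by omega)
    refine ⟨m', h1, h2, h3, ?_, by omega⟩
    rw [h4]
    conv_rhs => rw [hcons, VM_cons]
    simp [sF]
  · by_cases h1 : ∃ i, a + 1 ≤ m.count i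
    · obtain ⟨i, hi⟩ := h1
      have hi1 : 1 ≤ i := by
        rcases Nat.eq_zero_or_pos i with h | h
        · subst h; exact absurd (Multiset.count_pos.mp (by omega)) h0
        · exact h
      have hle : Multiset.replicate (a+1) i ≤ m := Multiset.le_count_iff_replicate_le.mp hi
      set m₂ := m - Multiset.replicate (a+1) i with hm2
      have hsplit : m₂ + Multiset.replicate (a+1) i = m := tsub_add_cancel_of_le hle
      set mnew := (i+1) ::ₘ (Multiset.replicate a (i-1) + m₂) with hmnew
      have hmcard : Multiset.card m = Multiset.card m₂ + (a+1) := by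
        conv_lhs => rw [← hsplit]
        simp; try omega
      have hmsum : m.sum = m₂.sum + (a+1) * i := by
        conv_lhs => rw [← hsplit]
        rw [Multiset.sum_add, Multiset.sum_replicate, smul_eq_mul]
      have hcard : Multiset.card mnew = Multiset.card m := by
        rw [hmnew, hmcard]; simp; try omega
      have hsumnew : mnew.sum + 1 ≤ m.sum := by
        rw [hmnew, Multiset.sum_cons, Multiset.sum_add, Multiset.sum_replicate, smul_eq_mul,
          hmsum]
        have h5 : a * (i - 1) + a = a * i := by
          have h7 : i - 1 + 1 = i := by omega
          nlinarith [h7]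
        have h8 : (a+1) * i = a * i + i := by ring
        omega
      have hVMnew : VM a mnew = VM a m := by
        rw [hmnew, ← hsplit, VM_cons, VM_add, VM_add, VM_replicate, VM_replicate]
        have := key1 (a := a) hi1
        omega
      have hW1 : 1 ≤ W := by
        have := Multiset.card_pos.mpr (show m ≠ 0 by
          intro h; rw [h] at hi; simp at hi; try omega)
        omega
      obtain ⟨m', g1, g2, g3, g4, g5⟩ := ih (W-1) (by omega) mnew (by omega)
      exact ⟨m', g1, g2, g3, by rw [g4, hVMnew], by omega⟩
    · by_cases h2 : ∃ p, m.count p = a ∧ ∃ i, 1 ≤ i ∧ i < p ∧ 1 ≤ m.count i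
      · obtain ⟨p, hp, i, hi1, hip, hci⟩ := h2
        have hpi : p ≠ i := by omega
        set r := Multiset.replicate a p + {i} with hrdef
        have hle : r ≤ m := by
          rw [Multiset.le_iff_count]
          intro x
          rw [hrdef]
          simp only [Multiset.count_add, Multiset.count_replicate, Multiset.count_singleton]
          by_cases hx1 : x = p
          · subst hx1; rw [if_pos rfl, if_neg (by omega)]; omega
          · rw [if_neg (fun h => hx1 h.symm)]
            by_cases hx2 : x = i
            · subst hx2; rw [if_pos rfl]; omega
            · rw [if_neg hx2]; omega
        set m₂ := m - r with hm2
        have hsplit : m₂ + r = m := tsub_add_cancel_of_le hle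
        set mnew := (p+1) ::ₘ (Multiset.replicate a (i-1) + m₂) with hmnew
        have hcardr : Multiset.card r = a + 1 := by rw [hrdef]; simp
        have hmcard : Multiset.card m = Multiset.card m₂ + (a+1) := by
          conv_lhs => rw [← hsplit]
          simp [hcardr]
        have hcard : Multiset.card mnew = Multiset.card m := by
          rw [hmnew, hmcard]; simp; try omega
        have hsumr : r.sum = a * p + i := by
          rw [hrdef]; simp [Multiset.sum_replicate, smul_eq_mul]
        have hmsum : m.sum = m₂.sum + (a * p + i) := by
          conv_lhs => rw [← hsplit]
          rw [Multiset.sum_add, hsumr]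
        have hsumnew : mnew.sum + 1 ≤ m.sum := by
          rw [hmnew, Multiset.sum_cons, Multiset.sum_add, Multiset.sum_replicate, smul_eq_mul,
            hmsum]
          have key : p + 1 + a * (i-1) + 1 ≤ a * p + i := by
            zify [hi1]
            have h9 : (0 : ℤ) ≤ (p : ℤ) - i := by
              have : (i : ℤ) + 1 ≤ p := by exact_mod_cast hip
              linarith
            have h10 : (0 : ℤ) ≤ (a : ℤ) - 2 := by
              have : (2 : ℤ) ≤ a := by exact_mod_cast ha
              linarith
            nlinarith [mul_nonneg (by linarith : (0:ℤ) ≤ (a:ℤ) - 1) h9]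
          omega
        have hVMr : VM a r = a * sF a p + sF a i := by
          rw [hrdef, VM_add, VM_replicate]; simp [VM]
        have hVMnew : VM a mnew = VM a m := by
          rw [hmnew, ← hsplit, VM_cons, VM_add, VM_add, VM_replicate, hVMr]
          have := key2 (a := a) (p := p) hi1
          omega
        have hW1 : 1 ≤ W := by
          have := Multiset.card_pos.mpr (show m ≠ 0 by
            intro h; rw [h] at hci; simp at hci)
          omega
        obtain ⟨m', g1, g2, g3, g4, g5⟩ := ih (W-1) (by omega) mnew (by omega)
        exact ⟨m', g1, g2, g3, by rw [g4, hVMnew], by omega⟩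
      · push_neg at h1 h2
        refine ⟨m, h0, fun i => by have := h1 i; omega, ?_, rfl, le_rfl⟩
        intro p hp i hi1 hip
        have := h2 p hp i hi1 hip
        omega

lemma Vv_pos {a : ℕ} (ha : 1 ≤ a) {k : ℕ} {j : ℕ → ℕ} (hk : 1 ≤ k) (hj : AReduced a k j) :
    1 ≤ Vv a j k := by
  have hjk : 1 ≤ j k := Nat.one_le_iff_ne_zero.mpr hj.2.1
  have hmem : k ∈ Finset.Icc 1 k := by simp [Finset.mem_Icc]; omega
  have := Finset.single_le_sum (f := fun i => j i * sF a i) (fun i _ => Nat.zero_le _) hmem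
  have hs := one_le_sF ha hk
  calc 1 ≤ j k * sF a k := by nlinarith
  _ ≤ Vv a j k := this

lemma Jv_min {a : ℕ} (ha : 2 ≤ a) {k : ℕ} {j : ℕ → ℕ} (hk : 1 ≤ k) (hj : AReduced a k j)
    (m : Multiset ℕ) (hm : 0 ∉ m) (hvm : VM a m = Vv a j k) : Jv j k ≤ Multiset.card m := by
  obtain ⟨m', h0', hcnt, hcond, hVM, hcard⟩ := rewriteM ha (Multiset.card m + m.sum) m le_rfl
  set K := k + m'.sum with hK
  have hxK : ∀ x ∈ m', 1 ≤ x ∧ x ≤ K := by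
    intro x hx
    constructor
    · rcases Nat.eq_zero_or_pos x with h | h
      · exact absurd (h ▸ hx) h0'
      · exact h
    · have : x ≤ m'.sum := Multiset.single_le_sum (fun y _ => Nat.zero_le y) x hx
      omega
  set jm := fun i => m'.count i with hjm
  have hRm : Red' a K jm := by
    constructor
    · intro i _ _; exact hcnt i
    · intro p _ _ hp i hi1 hi2; exact hcond p hp i hi1 hi2
  have hsub : m'.toFinset ⊆ Finset.Icc 1 K := by
    intro x hx
    rw [Multiset.mem_toFinset] at hx
    obtain ⟨hx1, hx2⟩ := hxK x hx
    simp [Finset.mem_Icc]; omega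
  have hVm : Vv a jm K = VM a m' := by
    rw [VM, Finset.sum_multiset_map_count]
    rw [Vv, ← Finset.sum_subset hsub]
    · apply Finset.sum_congr rfl
      intro x _
      simp [hjm, smul_eq_mul]
    · intro x _ hx
      rw [Multiset.mem_toFinset] at hx
      simp [hjm, Multiset.count_eq_zero_of_notMem (by simpa using hx)]
  have hJm : Jv jm K = Multiset.card m' := by
    rw [← Multiset.toFinset_sum_count_eq m']
    rw [Jv, ← Finset.sum_subset hsub]
    · intro x _ hx
      rw [Multiset.mem_toFinset] at hx
      simp [hjm, Multiset.count_eq_zero_of_notMem (by simpa using hx)]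
  set jp := fun i => if i ≤ k then j i else 0 with hjp
  have hRp : Red' a K jp := pad_red (by omega) hj (by omega)
  have hVp : Vv a jp K = Vv a j k := pad_sum (by omega) (sF a) j
  have hJp : Jv jp K = Jv j k := by
    have := pad_sum (k := k) (K := K) (by omega) (fun _ => 1) j
    simpa [Jv] using this
  have hveq : Vv a jp K = Vv a jm K := by
    rw [hVp, hVm, hVM, hvm]
  have := Jv_eq_of_Vv_eq (by omega) K jp jm hRp hRm hveq
  omega

lemma sF_zero (a : ℕ) : sF a 0 = 0 := by simp [sF]

lemma tF_zero (a b c : ℕ) : tF a b c 0 = c := by simp [tF, sF_zero]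

lemma tF_succ (a b c k : ℕ) : tF a b c (k+1) = a * tF a b c k + b := by
  unfold tF; rw [sF_succ, pow_succ]; ring

lemma tF_pos {a b c : ℕ} (ha : 1 ≤ a) (hc : 1 ≤ c) (k : ℕ) : 1 ≤ tF a b c k := by
  have h1 : 1 ≤ a ^ k := Nat.one_le_pow _ _ (by omega)
  have : 1 * 1 ≤ a ^ k * c := Nat.mul_le_mul h1 hc
  unfold tF; omega

lemma tF_mem_S {a b c : ℕ} {S : Set ℕ} (ha : 1 ≤ a) (hc : 1 ≤ c)
    (hS : IsThetaSG a b S) (hcS : c ∈ S) (k : ℕ) : tF a b c k ∈ S := by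
  induction k with
  | zero => rw [tF_zero]; exact hcS
  | succ n ih =>
    rw [tF_succ]
    exact hS.2.2 _ ih (by have := tF_pos (b := b) ha hc n; omega)

lemma mem_Hmon_iff {a b c : ℕ} (w : ℕ) : w ∈ Hmon a b c ↔
    ∃ m : Multiset ℕ, (m.map (tF a b c)).sum = w := by
  constructor
  · intro hw
    obtain ⟨l, hl, hsum⟩ := AddSubmonoid.exists_multiset_of_mem_closure hw
    clear hw
    subst hsum
    induction l using Multiset.induction with
    | empty => exact ⟨0, by simp⟩
    | cons y l ih =>
      obtain ⟨m, hm⟩ := ih (fun z hz => hl z (Multiset.mem_cons_of_mem hz))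
      obtain ⟨k, hk⟩ := hl y (Multiset.mem_cons_self _ _)
      exact ⟨k ::ₘ m, by simp [hm, hk]⟩
  · rintro ⟨m, rfl⟩
    induction m using Multiset.induction with
    | empty => simp
    | cons y l ih =>
      simp only [Multiset.map_cons, Multiset.sum_cons]
      exact AddSubmonoid.add_mem _ (AddSubmonoid.subset_closure ⟨y, rfl⟩) ih

lemma sum_tF_eq {a b c : ℕ} (ha : 1 ≤ a) (m : Multiset ℕ) :
    (m.map (tF a b c)).sum = c * ((a-1) * VM a m + Multiset.card m) + b * VM a m := by
  induction m using Multiset.induction with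
  | empty => simp [VM]
  | cons y l ih =>
    simp only [Multiset.map_cons, Multiset.sum_cons, VM, Multiset.card_cons, ih]
    have hy : tF a b c y = c * ((a-1) * sF a y + 1) + b * sF a y := by
      unfold tF; rw [pow_eq_sF ha]; ring
    rw [hy]
    simp only [VM] at ih ⊢
    ring

lemma mem_Hmon_iff' {a b c : ℕ} (ha : 1 ≤ a) (w : ℕ) : w ∈ Hmon a b c ↔
    ∃ (M : ℕ) (m : Multiset ℕ), 0 ∉ m ∧
      w = c * M + c * ((a-1) * VM a m + Multiset.card m) + b * VM a m := by
  rw [mem_Hmon_iff]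
  constructor
  · rintro ⟨m, rfl⟩
    rw [sum_tF_eq ha]
    set m₀ := m.filter (· = 0) with hm0
    set m' := m.filter (fun x => ¬ x = 0) with hm1
    have hsplit : m₀ + m' = m := Multiset.filter_add_not _ _
    refine ⟨Multiset.card m₀, m', ?_, ?_⟩
    · intro h
      have := Multiset.of_mem_filter h
      simp at this
    · have hV0 : VM a m₀ = 0 := by
        rw [VM]
        apply Multiset.sum_eq_zero
        intro x hx
        simp only [Multiset.mem_map] at hx
        obtain ⟨z, hz, rfl⟩ := hx
        have := Multiset.of_mem_filter hz
        rw [show z = 0 from this, sF_zero]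
      have hVeq : VM a m = VM a m₀ + VM a m' := by
        rw [← hsplit, VM]; simp [VM]
      have hceq : Multiset.card m = Multiset.card m₀ + Multiset.card m' := by
        rw [← hsplit]; simp
      rw [hVeq, hV0, hceq]
      ring
  · rintro ⟨M, m, hm, rfl⟩
    refine ⟨Multiset.replicate M 0 + m, ?_⟩
    rw [sum_tF_eq ha]
    have hV : VM a (Multiset.replicate M 0 + m) = VM a m := by
      simp [VM, Multiset.map_replicate, Multiset.sum_replicate, sF_zero]
    rw [hV]
    simp
    ring

lemma Gset_eq_Hmon {a b c : ℕ} (ha : 1 ≤ a) (hc : 1 ≤ c) :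
    Gset a b c = (Hmon a b c : Set ℕ) := by
  apply le_antisymm
  · apply Set.sInter_subset_of_mem
    constructor
    · refine ⟨AddSubmonoid.zero_mem _, fun x hx y hy => AddSubmonoid.add_mem _ hx hy, ?_⟩
      intro y hy hy0
      rw [SetLike.mem_coe, mem_Hmon_iff] at hy
      obtain ⟨m, rfl⟩ := hy
      have hmne : m ≠ 0 := by rintro rfl; simp at hy0
      obtain ⟨x, hx⟩ := Multiset.exists_mem_of_ne_zero hmne
      obtain ⟨m', rfl⟩ := Multiset.exists_cons_of_mem hx
      simp only [Multiset.map_cons, Multiset.sum_cons]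
      have : a * (tF a b c x + (m'.map (tF a b c)).sum) + b
          = tF a b c (x+1) + a * (m'.map (tF a b c)).sum := by
        rw [tF_succ]; ring
      rw [this]
      apply AddSubmonoid.add_mem
      · exact AddSubmonoid.subset_closure ⟨x+1, rfl⟩
      · have hmem : (m'.map (tF a b c)).sum ∈ Hmon a b c :=
          (mem_Hmon_iff _).mpr ⟨m', rfl⟩
        have := AddSubmonoid.nsmul_mem (Hmon a b c) hmem a
        simpa [nsmul_eq_mul] using this
    · exact AddSubmonoid.subset_closure ⟨0, (tF_zero a b c).symm⟩
  · intro x hx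
    rw [SetLike.mem_coe, mem_Hmon_iff] at hx
    obtain ⟨m, rfl⟩ := hx
    intro S hS
    obtain ⟨hS1, hS2⟩ := hS
    induction m using Multiset.induction with
    | empty => simpa using hS1.1
    | cons y l ih =>
      simp only [Multiset.map_cons, Multiset.sum_cons]
      exact hS1.2.1 _ (tF_mem_S ha hc hS1 hS2 y) _ ih

lemma sum_jtF {a b c : ℕ} (ha : 1 ≤ a) (k : ℕ) (j : ℕ → ℕ) :
    ∑ i ∈ Finset.Icc 1 k, j i * tF a b c i
      = c * ((a-1) * Vv a j k + Jv j k) + b * Vv a j k := by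
  have h : ∀ i ∈ Finset.Icc 1 k, j i * tF a b c i
      = c * ((a-1) * (j i * sF a i)) + c * j i + (j i * sF a i) * b := by
    intro i _
    unfold tF; rw [pow_eq_sF ha]; ring
  rw [Finset.sum_congr rfl h]
  rw [Finset.sum_add_distrib, Finset.sum_add_distrib]
  simp only [← Finset.mul_sum, ← Finset.sum_mul]
  unfold Vv Jv
  ring

end Aux

theorem stmt17 (a b c : ℕ) (ha : 0 < a) (hb : 0 < b) (hc : 2 ≤ c)
    (hcop : Nat.gcd b c = 1) (k : ℕ) (hk : 1 ≤ k)
    (j : ℕ → ℕ) (hj : AReduced a k j)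
    (hsum : c - 1 = ∑ i ∈ Finset.Icc 1 k, j i * sF a i) :
    IsGreatest {n : ℕ | n ∉ Gset a b c}
      (∑ i ∈ Finset.Icc 1 k, j i * tF a b c i - c) := by
  classical
  have ha1 : 1 ≤ a := ha
  have hVj : Aux.Vv a j k = c - 1 := hsum.symm
  set x := ∑ i ∈ Finset.Icc 1 k, j i * tF a b c i with hxdef
  have hxval : x = c * ((a-1) * (c-1) + Aux.Jv j k) + b * (c-1) := by
    rw [hxdef, Aux.sum_jtF ha1, hVj]
  have hkmem : k ∈ Finset.Icc 1 k := by simp [Finset.mem_Icc]; omega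
  have hJ1 : 1 ≤ Aux.Jv j k := by
    have h1 : 1 ≤ j k := Nat.one_le_iff_ne_zero.mpr hj.2.1
    have h2 : j k ≤ Aux.Jv j k :=
      Finset.single_le_sum (f := fun i => j i) (fun i _ => Nat.zero_le _) hkmem
    omega
  have hJc : Aux.Jv j k ≤ c - 1 := by
    rw [← hVj]
    apply Finset.sum_le_sum
    intro i hi
    simp only [Finset.mem_Icc] at hi
    have := Aux.one_le_sF ha1 hi.1
    nlinarith
  have hcx : c ≤ x := by
    have h1 : c * 1 ≤ c * ((a-1) * (c-1) + Aux.Jv j k) :=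
      Nat.mul_le_mul_left _ (by omega)
    omega
  have hJa1 : a = 1 → Aux.Jv j k = 1 := by
    intro h1
    have hjk : j k = 1 := by
      have h2 := hj.1 k hk le_rfl
      have h3 := hj.2.1
      omega
    rw [Aux.Jv, Finset.sum_eq_single_of_mem k hkmem, hjk]
    intro i hi hik
    simp only [Finset.mem_Icc] at hi
    exact hj.2.2 k hk le_rfl (by omega) i hi.1 (by omega)
  have hG : Gset a b c = (Hmon a b c : Set ℕ) := Aux.Gset_eq_Hmon ha1 (by omega)
  constructor
  · -- x - c is not in the semigroup
    rw [Set.mem_setOf_eq, hG]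
    intro hmem
    rw [SetLike.mem_coe, Aux.mem_Hmon_iff' ha1] at hmem
    obtain ⟨M, m, hm0, heq⟩ := hmem
    set S := Aux.VM a m with hSdef
    set CM := Multiset.card m with hCMdef
    have hxeq : x = c * M + c * ((a-1) * S + CM) + b * S + c := by omega
    -- congruences mod c
    have hx1 : x % c = (b * (c-1)) % c := by rw [hxval, Nat.mul_add_mod]
    have hx2 : x % c = (b * S) % c := by
      have h5 : x = c * (M + ((a-1) * S + CM) + 1) + b * S := by rw [hxeq]; ring
      rw [h5, Nat.mul_add_mod]
    have hbb : b * (c-1) ≡ b * S [MOD c] := by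
      show b * (c-1) % c = b * S % c
      rw [← hx1, ← hx2]
    have hSc : c - 1 ≡ S [MOD c] :=
      Nat.ModEq.cancel_left_of_coprime (by rwa [Nat.gcd_comm] at hcop) hbb
    have hSmod : S % c = c - 1 := by
      have h6 : S % c = (c-1) % c := hSc.symm
      rw [Nat.mod_eq_of_lt (show c - 1 < c by omega)] at h6
      exact h6
    set q := S / c with hqdef
    have hq : S = c * q + (c - 1) := by
      have h7 := Nat.div_add_mod S c
      rw [hSmod] at h7
      exact h7.symm
    set e := a - 1 with hedef
    have hkey : Aux.Jv j k = M + e * c * q + CM + b * q + 1 := by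
      rw [hq] at hxeq
      have h2' := congrArg (Nat.cast : ℕ → ℤ) hxval
      have h3' := congrArg (Nat.cast : ℕ → ℤ) hxeq
      push_cast [Nat.cast_sub (show 1 ≤ c by omega)] at h2' h3'
      have h4 : (c : ℤ) * (Aux.Jv j k) = (c : ℤ) * (M + e * c * q + CM + b * q + 1) := by
        linear_combination h3' - h2'
      have h5 : (Aux.Jv j k : ℤ) = ((M : ℤ) + e * c * q + CM + b * q + 1) :=
        mul_left_cancel₀ (by exact_mod_cast (by omega : c ≠ 0)) h4
      exact_mod_cast h5
    rcases Nat.eq_zero_or_pos q with hq0 | hq1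
    · -- q = 0 : m represents c - 1
      have hVm : Aux.VM a m = Aux.Vv a j k := by
        rw [hVj, ← hSdef, hq, hq0]; ring
      rcases Nat.lt_or_ge a 2 with ha2 | ha2
      · -- a = 1
        have haeq : a = 1 := by omega
        have hJe : Aux.Jv j k = 1 := hJa1 haeq
        have hCM0 : CM = 0 := by
          rw [hq0] at hkey
          simp at hkey
          omega
        have hm00 : m = 0 := Multiset.card_eq_zero.mp hCM0
        rw [hm00] at hVm
        simp [Aux.VM] at hVm
        omega
      · have := Aux.Jv_min ha2 hk hj m hm0 hVm
        rw [hq0] at hkey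
        simp at hkey
        omega
    · -- q ≥ 1
      rcases Nat.lt_or_ge a 2 with ha2 | ha2
      · have haeq : a = 1 := by omega
        have hJe : Aux.Jv j k = 1 := hJa1 haeq
        have hbq : 1 ≤ b * q := by
          have := Nat.mul_le_mul hb hq1
          omega
        omega
      · have he1 : 1 ≤ e := by omega
        have hecq : c ≤ e * c * q := by
          calc c = 1 * c * 1 := by ring
          _ ≤ e * c * q := by
            apply Nat.mul_le_mul
            · exact Nat.mul_le_mul he1 le_rfl
            · exact hq1
        omega
  · -- upper bound
    intro y hy
    rw [Set.mem_setOf_eq, hG] at hy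
    by_contra hlt
    push_neg at hlt
    apply hy
    rw [SetLike.mem_coe]
    obtain ⟨u, hu⟩ : ∃ u, b * u % c = 1 :=
      by obtain ⟨m, -, h⟩ := Nat.exists_mul_mod_eq_one_of_coprime hcop (by omega); exact ⟨m, h⟩
    set n := (u * y) % c with hn
    have hnc : n < c := Nat.mod_lt _ (by omega)
    have hbn : b * n ≡ y [MOD c] := by
      have h1 : n ≡ u * y [MOD c] := Nat.mod_modEq _ _
      have h2 : b * n ≡ b * (u * y) [MOD c] := h1.mul_left b
      have h3 : b * (u * y) = (b * u) * y := by ring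
      have h4 : (b * u) * y ≡ 1 * y [MOD c] := by
        apply Nat.ModEq.mul_right
        unfold Nat.ModEq
        rw [hu, Nat.mod_eq_of_lt (by omega)]
      calc b * n ≡ b * (u * y) [MOD c] := h2
      _ = (b * u) * y := h3
      _ ≡ 1 * y [MOD c] := h4
      _ = y := one_mul y
    rcases Nat.eq_zero_or_pos n with hn0 | hn1
    · -- y is a positive multiple of c
      have hyc : y % c = 0 := by
        rw [hn0] at hbn
        unfold Nat.ModEq at hbn
        simpa using hbn.symm
      rw [Aux.mem_Hmon_iff' ha1]
      refine ⟨y / c, 0, by simp, ?_⟩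
      have h8 := Nat.div_add_mod y c
      simp [Aux.VM]
      omega
    · obtain ⟨k', j', hk', hj', hv'⟩ := Aux.exists_reduced ha1 n hn1
      set g := ∑ i ∈ Finset.Icc 1 k', j' i * tF a b c i with hgdef
      have hgH : g ∈ Hmon a b c := by
        apply AddSubmonoid.sum_mem
        intro i _
        have h1 : tF a b c i ∈ Hmon a b c := AddSubmonoid.subset_closure ⟨i, rfl⟩
        have := AddSubmonoid.nsmul_mem (Hmon a b c) h1 (j' i)
        simpa [nsmul_eq_mul] using this
      have hgval : g = c * ((a-1) * n + Aux.Jv j' k') + b * n := by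
        rw [hgdef, Aux.sum_jtF ha1, hv']
      -- A-monotonicity
      have hA : (a-1) * n + Aux.Jv j' k' ≤ (a-1) * (c-1) + Aux.Jv j k := by
        set K := max k k' with hK
        set jp := fun i => if i ≤ k then j i else 0 with hjp
        set jp' := fun i => if i ≤ k' then j' i else 0 with hjp'
        have hRp : Aux.Red' a K jp := Aux.pad_red ha1 hj (le_max_left _ _)
        have hRp' : Aux.Red' a K jp' := Aux.pad_red ha1 hj' (le_max_right _ _)
        have hVp : Aux.Vv a jp K = c - 1 := by
          rw [← hVj]; exact Aux.pad_sum (le_max_left _ _) (sF a) j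
        have hVp' : Aux.Vv a jp' K = n := by
          rw [← hv']; exact Aux.pad_sum (le_max_right _ _) (sF a) j'
        have hJp : Aux.Jv jp K = Aux.Jv j k := by
          have := Aux.pad_sum (k := k) (K := K) (le_max_left _ _) (fun _ => 1) j
          simpa [Aux.Jv] using this
        have hJp' : Aux.Jv jp' K = Aux.Jv j' k' := by
          have := Aux.pad_sum (k := k') (K := K) (le_max_right _ _) (fun _ => 1) j'
          simpa [Aux.Jv] using this
        have hmono := Aux.Av_mono ha1 K jp' jp hRp' hRp (by rw [hVp, hVp']; omega)
        rw [Aux.Av_eq ha1 K jp', Aux.Av_eq ha1 K jp, hVp, hVp', hJp, hJp'] at hmono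
        exact hmono
      have hgx : g ≤ x := by
        rw [hgval, hxval]
        have h1 : c * ((a-1) * n + Aux.Jv j' k') ≤ c * ((a-1) * (c-1) + Aux.Jv j k) :=
          Nat.mul_le_mul_left _ hA
        have h2 : b * n ≤ b * (c-1) := Nat.mul_le_mul_left _ (by omega)
        omega
      have hgc : g % c = (b * n) % c := by rw [hgval, Nat.mul_add_mod]
      have hyg : g ≡ y [MOD c] := by
        unfold Nat.ModEq at hbn ⊢
        omega
      have hgy : g ≤ y := by
        by_contra h
        push_neg at h
        have hdvd : c ∣ (g - y) := (Nat.modEq_iff_dvd' (le_of_lt h)).mp hyg.symm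
        have := Nat.le_of_dvd (by omega) hdvd
        omega
      obtain ⟨t, ht⟩ := (Nat.modEq_iff_dvd' hgy).mp hyg
      have hyeq : y = g + c * t := by omega
      rw [hyeq]
      apply AddSubmonoid.add_mem _ hgH
      have h1 : (c : ℕ) ∈ Hmon a b c := AddSubmonoid.subset_closure ⟨0, (Aux.tF_zero a b c).symm⟩
      have := AddSubmonoid.nsmul_mem (Hmon a b c) h1 t
      simpa [nsmul_eq_mul, mul_comm] using this
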